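/- Let E, F, G be locally convex topological vector spaces over ℝ, let h : E × F → G be a bilinear map, and let A ⊆ E and B ⊆ F be totally bounded sets such that for every neighborhood U of 0 in G there exist a neighborhood V of 0 in E with h(V × B) ⊆ U and a neighborhood W of 0 in F with h(A × W) ⊆ U. Then h(A × B) is totally bounded in G. -/

import Mathlib

open Filter Topology Set Uniformity

private lemma cover_nhds_zero {E : Type*} [AddCommGroup E] [UniformSpace E] [IsUniformAddGroup E]
    {A : Set E} (hA : TotallyBounded A) {V : Set E} (hV : V ∈ 𝓝 (0 : E)) :
    ∃ s ⊆ A, s.Finite ∧ ∀ x ∈ A, ∃ a ∈ s, a - x ∈ V := by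
  have hd : {p : E × E | p.2 - p.1 ∈ V} ∈ 𝓤 E := by
    rw [uniformity_eq_comap_nhds_zero]
    exact preimage_mem_comap hV
  obtain ⟨t, hts, htf, hcov⟩ := totallyBounded_iff_subset.mp hA _ hd
  refine ⟨t, hts, htf, fun x hx => ?_⟩
  obtain ⟨a, ha, hax⟩ := mem_iUnion₂.mp (hcov hx)
  exact ⟨a, ha, hax⟩

/-- A bilinear map which is hypocontinuous with respect to a pair of totally
bounded sets `A`, `B` maps `A × B` to a totally bounded set. -/
theorem totallyBounded_image2_of_hypocontinuous
    {E F G : Type*}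
    [AddCommGroup E] [Module ℝ E] [UniformSpace E] [IsUniformAddGroup E]
    [ContinuousSMul ℝ E] [LocallyConvexSpace ℝ E]
    [AddCommGroup F] [Module ℝ F] [UniformSpace F] [IsUniformAddGroup F]
    [ContinuousSMul ℝ F] [LocallyConvexSpace ℝ F]
    [AddCommGroup G] [Module ℝ G] [UniformSpace G] [IsUniformAddGroup G]
    [ContinuousSMul ℝ G] [LocallyConvexSpace ℝ G]
    (h : E →ₗ[ℝ] F →ₗ[ℝ] G) (A : Set E) (B : Set F)
    (hA : TotallyBounded A) (hB : TotallyBounded B)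
    (hleft : ∀ U ∈ 𝓝 (0 : G), ∃ V ∈ 𝓝 (0 : E), ∀ x ∈ V, ∀ y ∈ B, h x y ∈ U)
    (hright : ∀ U ∈ 𝓝 (0 : G), ∃ W ∈ 𝓝 (0 : F), ∀ x ∈ A, ∀ y ∈ W, h x y ∈ U) :
    TotallyBounded (Set.image2 (fun x y => h x y) A B) := by
  rw [totallyBounded_iff_subset_finite_iUnion_nhds_zero]
  intro U hU
  obtain ⟨U₁, hU₁, hU₁add⟩ := exists_nhds_zero_half hU
  have hU₂ : U₁ ∩ (-U₁) ∈ 𝓝 (0 : G) := by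
    refine inter_mem hU₁ ?_
    exact neg_mem_nhds_zero G hU₁
  obtain ⟨V, hV, hVB⟩ := hleft _ hU₂
  obtain ⟨W, hW, hAW⟩ := hright _ hU₂
  obtain ⟨s, hsA, hsf, hsc⟩ := cover_nhds_zero hA hV
  obtain ⟨t, htB, htf, htc⟩ := cover_nhds_zero hB hW
  refine ⟨Set.image2 (fun x y => h x y) s t, hsf.image2 _ htf, ?_⟩
  rintro _ ⟨x, hx, y, hy, rfl⟩
  obtain ⟨a, ha, hax⟩ := hsc x hx
  obtain ⟨b, hb, hby⟩ := htc y hy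
  refine mem_iUnion₂.mpr ⟨h a b, mem_image2_of_mem ha hb, ?_⟩
  have h1 : h (a - x) y ∈ U₁ ∩ (-U₁) := hVB _ hax _ hy
  have h2 : h a (b - y) ∈ U₁ ∩ (-U₁) := hAW _ (hsA ha) _ hby
  have key : h x y - h a b = (-(h (a - x) y)) + (-(h a (b - y))) := by
    simp only [map_sub, LinearMap.sub_apply]
    abel
  have : h x y - h a b ∈ U := by
    rw [key]
    exact hU₁add _ (by simpa using h1.2) _ (by simpa using h2.2)
  simpa [Set.mem_vadd_set] using ⟨h x y - h a b, this, by abel⟩
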